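/- If v is a dismantlable vertex of a graph G, then the inclusion G \ v ↪ G is a ×-homotopy equivalence. -/

import Mathlib

/-- A graph: a symmetric (loops allowed) adjacency relation on the vertex type `V`. -/
structure SymGraph (V : Type*) where
  Adj : V → V → Prop
  symm : ∀ v w, Adj v w → Adj w v

/-- A graph homomorphism from `G` to `H`. -/
def IsGraphHom {V W : Type*} (G : SymGraph V) (H : SymGraph W) (f : V → W) : Prop :=
  ∀ v w, G.Adj v w → H.Adj (f v) (f w)

/-- A multi-homomorphism from `G` to `H`: it assigns to each vertex of `G` a nonempty set of
vertices of `H` so that adjacent vertices have completely adjacent images.  The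
multi-homomorphisms, ordered pointwise by inclusion, form the Hom complex `Hom(G, H)`. -/
def IsMultiHom {V W : Type*} (G : SymGraph V) (H : SymGraph W) (η : V → Set W) : Prop :=
  (∀ v, (η v).Nonempty) ∧ ∀ v w, G.Adj v w → ∀ x ∈ η v, ∀ y ∈ η w, H.Adj x y

/-- One step of a zigzag in `Hom(G, H)`: both multi-homomorphisms are comparable. -/
def mhStep {V W : Type*} (G : SymGraph V) (H : SymGraph W) (η η' : V → Set W) : Prop :=
  IsMultiHom G H η ∧ IsMultiHom G H η' ∧ ((∀ v, η v ⊆ η' v) ∨ (∀ v, η' v ⊆ η v))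

/-- Two graph homomorphisms are ×-homotopic iff they lie in the same connected component of
the Hom complex `Hom(G, H)`. -/
def XHomotopic {V W : Type*} (G : SymGraph V) (H : SymGraph W) (f g : V → W) : Prop :=
  Relation.ReflTransGen (mhStep G H) (fun v => {f v}) (fun v => {g v})

/-- `f : G → H` is a ×-homotopy equivalence. -/
def IsXHomotopyEquiv {V W : Type*} (G : SymGraph V) (H : SymGraph W) (f : V → W) : Prop :=
  IsGraphHom G H f ∧ ∃ h : W → V, IsGraphHom H G h ∧
    XHomotopic G G (h ∘ f) id ∧ XHomotopic H H (f ∘ h) id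

/-- The induced subgraph of `G` on the vertex set `S`. -/
def SymGraph.induce {V : Type*} (G : SymGraph V) (S : Set V) : SymGraph S where
  Adj x y := G.Adj x y
  symm := fun x y h => G.symm _ _ h

/-- The vertex `v` of `G` is dismantlable: some vertex `w ≠ v` satisfies `N(v) ⊆ N(w)`. -/
def IsDismantlable {V : Type*} (G : SymGraph V) (v : V) : Prop :=
  ∃ w, w ≠ v ∧ ∀ u, G.Adj u v → G.Adj u w

/-- If v is a dismantlable vertex of a graph G, then the inclusion G \ v ↪ G is
a ×-homotopy equivalence. -/
theorem inclusion_xHomotopyEquiv_of_isDismantlable {V : Type*} (G : SymGraph V) (v : V)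
    (hv : IsDismantlable G v) :
    IsXHomotopyEquiv (G.induce {u | u ≠ v}) G (fun x => (x : V)) := by
  classical
  obtain ⟨w, hwv, hN⟩ := hv
  -- basic adjacency facts
  have adj_aw : ∀ a, G.Adj a v → G.Adj a w := hN
  have adj_wb : ∀ b, G.Adj v b → G.Adj w b := fun b h =>
    G.symm _ _ (hN b (G.symm _ _ h))
  -- the retraction
  set S : Set V := {u | u ≠ v} with hS
  have hw : w ∈ S := hwv
  let h : V → S := fun u => if hu : u = v then ⟨w, hw⟩ else ⟨u, hu⟩
  have hval : ∀ u : V, ((h u : V) = u ∧ u ≠ v) ∨ ((h u : V) = w ∧ u = v) := by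
    intro u
    by_cases hu : u = v
    · right; simp [h, hu]
    · left; simp [h, hu]
  refine ⟨fun a b hab => hab, h, ?_, ?_, ?_⟩
  · -- h is a graph hom
    intro a b hab
    show G.Adj (h a : V) (h b : V)
    rcases hval a with ⟨ha, _⟩ | ⟨ha, hav⟩ <;> rcases hval b with ⟨hb, _⟩ | ⟨hb, hbv⟩ <;>
      rw [ha, hb]
    · exact hab
    · exact adj_aw a (hbv ▸ hab)
    · exact adj_wb b (hav ▸ hab)
    · rw [hav, hbv] at hab; exact adj_wb w (adj_aw v hab)
  · -- h ∘ incl = id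
    have hAB : (h ∘ fun x : S => (x : V)) = id := by
      funext x
      rcases hval (x : V) with ⟨hx, _⟩ | ⟨_, hxv⟩
      · exact Subtype.ext hx
      · exact absurd hxv x.2
    show XHomotopic _ _ (h ∘ fun x : S => (x : V)) id
    rw [hAB]
    exact Relation.ReflTransGen.refl
  · -- incl ∘ h ≃ id via η' := {v, w} at v
    let η : V → Set V := fun u => if u = v then {v, w} else {u}
    have hmem : ∀ u x, x ∈ η u → x = u ∨ (u = v ∧ x = w) := by
      intro u x hx
      by_cases hu : u = v
      · simp only [η, hu, if_pos rfl, Set.mem_insert_iff, Set.mem_singleton_iff] at hx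
        rcases hx with hx | hx
        · left; rw [hx, hu]
        · right; exact ⟨hu, hx⟩
      · left; simpa [η, hu] using hx
    have hηmh : IsMultiHom G G η := by
      constructor
      · intro u
        by_cases hu : u = v <;> simp [η, hu]
      · intro a b hab x hx y hy
        rcases hmem a x hx with hx | ⟨hav, hxw⟩ <;> rcases hmem b y hy with hy | ⟨hbv, hyw⟩
        · rw [hx, hy]; exact hab
        · rw [hx, hyw]; exact adj_aw a (hbv ▸ hab)
        · rw [hxw, hy]; exact adj_wb b (hav ▸ hab)
        · rw [hxw, hyw]; rw [hav, hbv] at hab; exact adj_wb w (adj_aw v hab)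
    have hfh : IsGraphHom G G ((fun x : S => (x : V)) ∘ h) := by
      intro a b hab
      rcases hval a with ⟨ha, _⟩ | ⟨ha, hav⟩ <;> rcases hval b with ⟨hb, _⟩ | ⟨hb, hbv⟩ <;>
        simp only [Function.comp] <;> rw [ha, hb]
      · exact hab
      · exact adj_aw a (hbv ▸ hab)
      · exact adj_wb b (hav ▸ hab)
      · rw [hav, hbv] at hab; exact adj_wb w (adj_aw v hab)
    have hfhmh : IsMultiHom G G (fun u => {((fun x : S => (x : V)) ∘ h) u}) := by
      refine ⟨fun u => ⟨_, rfl⟩, fun a b hab x hx y hy => ?_⟩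
      rw [Set.mem_singleton_iff] at hx hy
      rw [hx, hy]; exact hfh a b hab
    have hidmh : IsMultiHom G G (fun u => ({id u} : Set V)) := by
      refine ⟨fun u => ⟨_, rfl⟩, fun a b hab x hx y hy => ?_⟩
      rw [Set.mem_singleton_iff] at hx hy
      rw [hx, hy]; exact hab
    have step1 : mhStep G G (fun u => {((fun x : S => (x : V)) ∘ h) u}) η := by
      refine ⟨hfhmh, hηmh, Or.inl fun u x hx => ?_⟩
      rw [Set.mem_singleton_iff] at hx
      subst hx
      rcases hval u with ⟨hu, huv⟩ | ⟨hu, huv⟩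
      · rw [show η u = {u} from if_neg huv]
        simp only [Set.mem_singleton_iff, Function.comp]
        exact hu
      · rw [huv] at hu ⊢
        rw [show η v = {v, w} from if_pos rfl]
        simp only [Set.mem_insert_iff, Set.mem_singleton_iff, Function.comp]
        exact Or.inr hu
    have step2 : mhStep G G η (fun u => ({id u} : Set V)) := by
      refine ⟨hηmh, hidmh, Or.inr fun u x hx => ?_⟩
      have hx' : x = u := hx
      rw [hx']
      by_cases hu : u = v <;> simp [η, hu]
    exact (Relation.ReflTransGen.single step1).tail step2
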